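/- Contrapositive of the tableau bound: if a tableau $T \subseteq \{1,\dots,n\}\times\{1,\dots,m\}$ satisfies $|T| > \max\{f(k) : 1 \le k \le d+1\}$ with $f(x) = x^2 + (m-n-d-2)x + (n+1)(d+1) - m$ and $d+1 \le \min(n,m)$, then $T$ contains the staircase $R_{d+1} = \{(i,j) : i + j \le d+2\}$. -/
import Mathlib


/-- A subset `T` of the `n × m` grid `{1,…,n} × {1,…,m}` is a *tableau* if it is
downward-left closed. -/
def IsTableau (n m : ℕ) (T : Finset (ℕ × ℕ)) : Prop :=
  T ⊆ Finset.Icc 1 n ×ˢ Finset.Icc 1 m ∧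
    ∀ p ∈ T, ∀ k l : ℕ, 1 ≤ k → k ≤ p.1 → 1 ≤ l → l ≤ p.2 → (k, l) ∈ T

/-- The quadratic `f(x) = x² + (m-n-d-2)x + (n+1)(d+1) - m`. -/
def fQ (n m d : ℕ) (x : ℤ) : ℤ :=
  x ^ 2 + ((m : ℤ) - n - d - 2) * x + ((n : ℤ) + 1) * ((d : ℤ) + 1) - m

/-- `max { f(k) : 1 ≤ k ≤ d+1 }`. -/
def maxF (n m d : ℕ) : ℤ :=
  (Finset.Icc 1 (d + 1)).sup' (Finset.nonempty_Icc.mpr (by omega))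
    (fun k : ℕ => fQ n m d (k : ℤ))

/-- If a tableau `T` in the `n × m` grid satisfies
`|T| > max { f(k) : 1 ≤ k ≤ d+1 }` (with `d+1 ≤ min(n,m)`), then `T` contains the
staircase `R_{d+1} = {(i,j) : i+j ≤ d+2}`. -/
theorem stmt_8 (n m d : ℕ) (hn : d + 1 ≤ n) (hm : d + 1 ≤ m)
    (T : Finset (ℕ × ℕ)) (hT : IsTableau n m T)
    (hcard : maxF n m d < (T.card : ℤ)) :
    (Finset.Icc 1 n ×ˢ Finset.Icc 1 m).filter (fun p => p.1 + p.2 ≤ d + 2) ⊆ T := by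
  intro p hp
  by_contra hpT
  simp only [Finset.mem_filter, Finset.mem_product, Finset.mem_Icc] at hp
  obtain ⟨⟨⟨hi1, hin⟩, hj1, hjm⟩, hsum⟩ := hp
  set i := p.1
  set j := p.2
  -- T avoids the upper-right rectangle [i,n] × [j,m]
  have havoid : ∀ q ∈ T, ¬ (i ≤ q.1 ∧ j ≤ q.2) := by
    rintro q hq ⟨h1, h2⟩
    have := hT.2 q hq i j hi1 h1 hj1 h2
    exact hpT (by simpa using this)
  have hsub : T ⊆ (Finset.Icc 1 n ×ˢ Finset.Icc 1 m).filter
      (fun q => ¬ (i ≤ q.1 ∧ j ≤ q.2)) := by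
    intro q hq
    exact Finset.mem_filter.mpr ⟨hT.1 hq, havoid q hq⟩
  have hrect : (Finset.Icc 1 n ×ˢ Finset.Icc 1 m).filter
      (fun q => i ≤ q.1 ∧ j ≤ q.2) = Finset.Icc i n ×ˢ Finset.Icc j m := by
    ext q
    simp only [Finset.mem_filter, Finset.mem_product, Finset.mem_Icc]
    omega
  have hcards := Finset.card_filter_add_card_filter_not
      (s := Finset.Icc 1 n ×ˢ Finset.Icc 1 m) (p := fun q => i ≤ q.1 ∧ j ≤ q.2)
  rw [hrect] at hcards
  have hgrid : (Finset.Icc 1 n ×ˢ Finset.Icc 1 m).card = n * m := by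
    rw [Finset.card_product, Nat.card_Icc, Nat.card_Icc]; simp
  have hrc : (Finset.Icc i n ×ˢ Finset.Icc j m).card = (n + 1 - i) * (m + 1 - j) := by
    rw [Finset.card_product, Nat.card_Icc, Nat.card_Icc]
  have hTle : T.card ≤ n * m - (n + 1 - i) * (m + 1 - j) := by
    have := Finset.card_le_card hsub
    omega
  -- compare with fQ at x = i
  have hile : i ≤ d + 1 := by omega
  have hmax : fQ n m d (i : ℤ) ≤ maxF n m d :=
    Finset.le_sup' (fun k : ℕ => fQ n m d (k : ℤ))
      (Finset.mem_Icc.mpr ⟨hi1, hile⟩)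
  have hfi : (n * m : ℤ) - ((n : ℤ) + 1 - i) * ((m : ℤ) + 1 - (d + 2 - i)) = fQ n m d (i : ℤ) := by
    simp only [fQ]; ring
  have hTleZ : (T.card : ℤ) ≤ fQ n m d (i : ℤ) := by
    have h1 : (T.card : ℤ) ≤ (n * m : ℤ) - ((n : ℤ) + 1 - i) * ((m : ℤ) + 1 - j) := by
      have h0 : T.card + (n + 1 - i) * (m + 1 - j) ≤ n * m := by omega
      have hc := (Nat.cast_le (α := ℤ)).2 h0
      push_cast [Nat.cast_sub (show i ≤ n + 1 by omega),
        Nat.cast_sub (show j ≤ m + 1 by omega)] at hc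
      linarith
    rw [← hfi]
    have h2 : ((m : ℤ) + 1 - (d + 2 - i)) ≤ ((m : ℤ) + 1 - j) := by
      have : (j : ℤ) ≤ (d : ℤ) + 2 - i := by push_cast; omega
      omega
    have h3 : (0 : ℤ) ≤ (n : ℤ) + 1 - i := by push_cast; omega
    nlinarith
  omega
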